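/- Let t ≥ 2 be an integer and let G be a finite connected simple graph that is regular and admits a K_t-decomposition 𝒬 = {Q_1, …, Q_v} such that any two distinct cliques of 𝒬 intersect in exactly one vertex. Then cp^{(t)}(G) = ρ(G) − t + 1 + ⌈δ(G)/(t−1)⌉, i.e., equality holds in the spectral lower bound for cp^{(t)}(G). -/

import Mathlib

open Finset SimpleGraph Polynomial
open Matrix

variable {V : Type*}

/-- A clique partition of `G`: a set of cliques of `G` such that every edge of `G`
lies in exactly one of them. -/
def IsCliquePartition [DecidableEq V] (G : SimpleGraph V) (P : Finset (Finset V)) : Prop :=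
  (∀ s ∈ P, G.IsClique (s : Set V)) ∧
    ∀ u v : V, G.Adj u v → ∃! s, s ∈ P ∧ u ∈ s ∧ v ∈ s

/-- The spectral radius of a finite graph: the largest eigenvalue of its adjacency matrix. -/
noncomputable def specRad [Fintype V] [DecidableEq V] (G : SimpleGraph V)
    [DecidableRel G.Adj] : ℝ :=
  sSup {μ : ℝ | Module.End.HasEigenvalue (Matrix.toLin' (G.adjMatrix ℝ)) μ}

/-- `cpT G t` : the minimum number of cliques in a clique partition of `G` in which
every clique has at most `t` vertices. -/
noncomputable def cpT [DecidableEq V] (G : SimpleGraph V) (t : ℕ) : ℕ :=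
  sInf {m | ∃ P : Finset (Finset V),
    IsCliquePartition G P ∧ (∀ s ∈ P, s.card ≤ t) ∧ P.card = m}

/-- `cp G` : the clique partition number of `G`. -/
noncomputable def cp [DecidableEq V] (G : SimpleGraph V) : ℕ :=
  sInf {m | ∃ P : Finset (Finset V), IsCliquePartition G P ∧ P.card = m}

-- Lemma: double counting adjacent pairs
lemma pairs_count [Fintype V] [DecidableEq V] (G : SimpleGraph V) [DecidableRel G.Adj]
    (P : Finset (Finset V)) (hP : IsCliquePartition G P) :
    (univ.filter fun p : V × V => G.Adj p.1 p.2).card = ∑ s ∈ P, s.offDiag.card := by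
  have hbU : (univ.filter fun p : V × V => G.Adj p.1 p.2) = P.biUnion (fun s => s.offDiag) := by
    ext ⟨u, v⟩
    simp only [mem_filter, mem_univ, true_and, mem_biUnion, mem_offDiag]
    constructor
    · intro h
      obtain ⟨s, ⟨hs, hu, hv⟩, _⟩ := hP.2 u v h
      exact ⟨s, hs, hu, hv, h.ne⟩
    · rintro ⟨s, hs, hu, hv, hne⟩
      exact hP.1 s hs hu hv hne
  rw [hbU]
  apply card_biUnion
  intro s₁ h₁ s₂ h₂ hne
  rw [Function.onFun, Finset.disjoint_left]
  rintro ⟨u, v⟩ hm₁ hm₂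
  simp only [mem_offDiag] at hm₁ hm₂
  have hadj : G.Adj u v := hP.1 s₁ h₁ hm₁.1 hm₁.2.1 hm₁.2.2
  obtain ⟨s, _, huniq⟩ := hP.2 u v hadj
  exact hne ((huniq s₁ ⟨h₁, hm₁.1, hm₁.2.1⟩).trans (huniq s₂ ⟨h₂, hm₂.1, hm₂.2.1⟩).symm)

lemma pairs_card [Fintype V] [DecidableEq V] (G : SimpleGraph V) [DecidableRel G.Adj]
    {d : ℕ} (hreg : G.IsRegularOfDegree d) :
    (univ.filter fun p : V × V => G.Adj p.1 p.2).card = Fintype.card V * d := by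
  rw [Finset.card_eq_sum_card_fiberwise (f := Prod.fst) (t := univ) (fun x _ => mem_univ _)]
  rw [Fintype.card, ← smul_eq_mul, ← Finset.sum_const]
  apply Finset.sum_congr rfl
  intro v _
  rw [← hreg v, ← card_neighborFinset_eq_degree]
  apply Finset.card_bij (fun p _ => p.2)
  · rintro ⟨a, b⟩ hp
    simp only [mem_filter, mem_univ, true_and] at hp
    obtain ⟨h1, h2⟩ := hp
    subst h2
    simpa using h1
  · rintro ⟨a, b⟩ hp ⟨c, e⟩ hq h
    simp only [mem_filter] at hp hq
    simp_all [Prod.ext_iff]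
  · intro b hb
    refine ⟨(v, b), ?_, rfl⟩
    simp only [mem_filter, mem_univ, true_and, and_true]
    simpa using hb

-- Lemma B: degree x = (#cliques through x) * (t-1)
lemma degree_eq [Fintype V] [DecidableEq V] (G : SimpleGraph V) [DecidableRel G.Adj]
    (P : Finset (Finset V)) (hP : IsCliquePartition G P) {t : ℕ}
    (hcard : ∀ s ∈ P, s.card = t) (x : V) :
    G.degree x = (P.filter (x ∈ ·)).card * (t - 1) := by
  have hbU : G.neighborFinset x = (P.filter (x ∈ ·)).biUnion (fun s => s.erase x) := by
    ext y
    simp only [mem_neighborFinset, mem_biUnion, mem_filter, mem_erase]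
    constructor
    · intro h
      obtain ⟨s, ⟨hs, hx, hy⟩, _⟩ := hP.2 x y h
      exact ⟨s, ⟨hs, hx⟩, h.ne', hy⟩
    · rintro ⟨s, ⟨hs, hx⟩, hne, hy⟩
      exact hP.1 s hs hx hy (Ne.symm hne)
  rw [← card_neighborFinset_eq_degree, hbU, card_biUnion]
  · have h1 : ∀ s ∈ P.filter (x ∈ ·), (s.erase x).card = t - 1 := by
      intro s hs
      simp only [mem_filter] at hs
      rw [Finset.card_erase_of_mem hs.2, hcard s hs.1]
    rw [Finset.sum_congr rfl h1, Finset.sum_const, smul_eq_mul]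
  · intro s₁ h₁ s₂ h₂ hne
    simp only [Finset.mem_coe, mem_filter] at h₁ h₂
    rw [Function.onFun, Finset.disjoint_left]
    intro y hy₁ hy₂
    simp only [mem_erase] at hy₁ hy₂
    have hadj : G.Adj x y := hP.1 s₁ h₁.1 h₁.2 hy₁.2 (Ne.symm hy₁.1)
    obtain ⟨s, _, huniq⟩ := hP.2 x y hadj
    exact hne ((huniq s₁ ⟨h₁.1, h₁.2, hy₁.2⟩).trans (huniq s₂ ⟨h₂.1, h₂.2, hy₂.2⟩).symm)

-- Lemma C: |P| = t * (r - 1) + 1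
lemma P_card [Fintype V] [Nonempty V] [DecidableEq V] (G : SimpleGraph V) [DecidableRel G.Adj]
    (P : Finset (Finset V)) (hP : IsCliquePartition G P) {t : ℕ}
    (hcard : ∀ s ∈ P, s.card = t)
    (hint : ∀ s₁ ∈ P, ∀ s₂ ∈ P, s₁ ≠ s₂ → (s₁ ∩ s₂).card = 1)
    {s₀ : Finset V} (hs₀ : s₀ ∈ P) {r : ℕ}
    (hr : ∀ x ∈ s₀, (P.filter (x ∈ ·)).card = r) :
    P.card = t * (r - 1) + 1 := by
  classical
  have key : (P.erase s₀).card = t * (r - 1) := by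
    -- choose for each s ∈ P.erase s₀ the intersection vertex
    have hfn : ∀ s ∈ P.erase s₀, ∃ x, s ∩ s₀ = {x} := by
      intro s hs
      rw [mem_erase] at hs
      exact Finset.card_eq_one.mp (hint s hs.2 s₀ hs₀ hs.1)
    set f : Finset V → V := fun s =>
      if h : (s ∩ s₀).Nonempty then h.choose else Classical.arbitrary _
    have hf : ∀ s ∈ P.erase s₀, f s ∈ s ∩ s₀ := by
      intro s hs
      obtain ⟨x, hx⟩ := hfn s hs
      have hne : (s ∩ s₀).Nonempty := ⟨x, by simp [hx]⟩
      simp only [f, dif_pos hne]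
      exact hne.choose_spec
    have hfu : ∀ s ∈ P.erase s₀, ∀ y, y ∈ s ∩ s₀ → y = f s := by
      intro s hs y hy
      obtain ⟨x, hx⟩ := hfn s hs
      have := hf s hs
      rw [hx, Finset.mem_singleton] at this hy
      rw [hy, this]
    rw [Finset.card_eq_sum_card_fiberwise (f := f) (t := s₀)
      (fun s hs => (Finset.mem_inter.mp (hf s hs)).2)]
    have hfib : ∀ x ∈ s₀, ((P.erase s₀).filter fun s => f s = x)
        = (P.filter (x ∈ ·)).erase s₀ := by
      intro x hx
      ext s
      simp only [mem_filter]
      constructor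
      · rintro ⟨hs, hfs⟩
        have hm := hf s hs
        rw [hfs] at hm
        exact mem_erase.mpr ⟨(mem_erase.mp hs).1, mem_filter.mpr ⟨(mem_erase.mp hs).2,
          (Finset.mem_inter.mp hm).1⟩⟩
      · intro hmem
        rw [mem_erase, mem_filter] at hmem
        have hs : s ∈ P.erase s₀ := mem_erase.mpr ⟨hmem.1, hmem.2.1⟩
        exact ⟨hs, (hfu s hs x (Finset.mem_inter.mpr ⟨hmem.2.2, hx⟩)).symm⟩
    rw [Finset.sum_congr rfl fun x hx => by rw [hfib x hx]]
    have : ∀ x ∈ s₀, ((P.filter (x ∈ ·)).erase s₀).card = r - 1 := by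
      intro x hx
      rw [Finset.card_erase_of_mem (Finset.mem_filter.mpr ⟨hs₀, hx⟩), hr x hx]
    rw [Finset.sum_congr rfl this, Finset.sum_const, smul_eq_mul, hcard s₀ hs₀]
  have := Finset.card_erase_add_one hs₀
  omega


lemma specRad_regular [Fintype V] [Nonempty V] [DecidableEq V] (G : SimpleGraph V)
    [DecidableRel G.Adj] {d : ℕ} (hreg : G.IsRegularOfDegree d) :
    specRad G = d := by
  set S : Set ℝ := {μ : ℝ | Module.End.HasEigenvalue (Matrix.toLin' (G.adjMatrix ℝ)) μ}
  have hd : (d : ℝ) ∈ S := by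
    apply Module.End.hasEigenvalue_of_hasEigenvector
      (x := Function.const V (1 : ℝ))
    constructor
    · rw [Module.End.mem_eigenspace_iff, Matrix.toLin'_apply]
      funext v
      rw [adjMatrix_mulVec_const_apply_of_regular hreg]
      simp
    · intro h
      have := congrFun h (Classical.arbitrary V)
      simp [Function.const] at this
  have hub : ∀ μ ∈ S, μ ≤ (d : ℝ) := by
    intro μ hμ
    obtain ⟨x, hx⟩ := Module.End.HasEigenvalue.exists_hasEigenvector hμ
    have hev : (G.adjMatrix ℝ) *ᵥ x = μ • x := by
      have := hx.1
      rwa [Module.End.mem_eigenspace_iff, Matrix.toLin'_apply] at this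
    obtain ⟨i, _, hi⟩ := Finset.exists_max_image Finset.univ (fun j => |x j|)
      Finset.univ_nonempty
    have hxi : 0 < |x i| := by
      rcases lt_or_eq_of_le (abs_nonneg (x i)) with h | h
      · exact h
      · exfalso
        apply hx.2
        funext j
        have := hi j (Finset.mem_univ j)
        rw [← h] at this
        exact abs_eq_zero.mp (le_antisymm (h ▸ this) (abs_nonneg (x j)))
    have heq : μ * x i = ∑ j, (G.adjMatrix ℝ) i j * x j := by
      have h2 := congrFun hev i
      rw [Matrix.mulVec, dotProduct] at h2
      simp only [Pi.smul_apply, smul_eq_mul] at h2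
      exact h2.symm
    have hle : |μ| * |x i| ≤ (d : ℝ) * |x i| := by
      rw [← abs_mul, heq]
      calc |(∑ j, (G.adjMatrix ℝ) i j * x j)| ≤ ∑ j, |(G.adjMatrix ℝ) i j * x j| :=
            Finset.abs_sum_le_sum_abs _ _
        _ ≤ ∑ j, (G.adjMatrix ℝ) i j * |x i| := by
            apply Finset.sum_le_sum
            intro j _
            rw [abs_mul]
            have h01 : |(G.adjMatrix ℝ) i j| = (G.adjMatrix ℝ) i j := by
              simp only [SimpleGraph.adjMatrix_apply]
              split <;> simp
            rw [h01]
            exact mul_le_mul_of_nonneg_left (hi j (Finset.mem_univ j)) (by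
              simp only [SimpleGraph.adjMatrix_apply]; split <;> simp)
        _ = (d : ℝ) * |x i| := by
            rw [← Finset.sum_mul]
            congr 1
            have := adjMatrix_mulVec_const_apply_of_regular (a := (1:ℝ)) hreg (v := i)
            rw [Matrix.mulVec, dotProduct] at this
            simpa using this
    have : |μ| ≤ (d : ℝ) := le_of_mul_le_mul_right (by linarith [hle]) hxi
    exact (le_abs_self μ).trans this
  have hdef : specRad G = sSup S := rfl
  rw [hdef]
  exact le_antisymm (csSup_le ⟨_, hd⟩ hub) (le_csSup ⟨(d : ℝ), hub⟩ hd)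


/-- If a connected regular graph `G` admits a `K_t`-decomposition
`𝒬 = {Q_1, …, Q_v}` in which any two distinct cliques intersect in exactly one vertex,
then equality holds in the spectral lower bound for `cp^{(t)}(G)`. -/
theorem cpT_eq_specRad_of_decomposition [Fintype V] [DecidableEq V] (G : SimpleGraph V)
    [DecidableRel G.Adj] (t : ℕ) (ht : 2 ≤ t) (hconn : G.Connected)
    (hreg : ∃ d, G.IsRegularOfDegree d)
    (P : Finset (Finset V)) (hPne : P.Nonempty) (hP : IsCliquePartition G P)
    (hcard : ∀ s ∈ P, s.card = t)
    (hint : ∀ s₁ ∈ P, ∀ s₂ ∈ P, s₁ ≠ s₂ → (s₁ ∩ s₂).card = 1) :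
    (cpT G t : ℝ) = specRad G - t + 1 + (⌈(G.minDegree : ℝ) / ((t : ℝ) - 1)⌉ : ℤ) := by
  classical
  obtain ⟨d, hreg⟩ := hreg
  haveI hVne : Nonempty V := hconn.nonempty
  obtain ⟨s₀, hs₀⟩ := hPne
  have hs₀card : s₀.card = t := hcard s₀ hs₀
  have hs₀ne : s₀.Nonempty := by rw [← Finset.card_pos, hs₀card]; omega
  obtain ⟨x₀, hx₀⟩ := hs₀ne
  set r := (P.filter (x₀ ∈ ·)).card with hrdef
  have hr1 : 1 ≤ r := Finset.card_pos.mpr ⟨s₀, Finset.mem_filter.mpr ⟨hs₀, hx₀⟩⟩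
  have hdeg : ∀ x, G.degree x = (P.filter (x ∈ ·)).card * (t - 1) :=
    degree_eq G P hP hcard
  have hd : d = r * (t - 1) := by rw [← hreg x₀, hdeg x₀]
  have hrall : ∀ x ∈ s₀, (P.filter (x ∈ ·)).card = r := by
    intro x hx
    have h1 : (P.filter (x ∈ ·)).card * (t - 1) = r * (t - 1) := by
      rw [← hdeg x, hreg x, hd]
    exact Nat.eq_of_mul_eq_mul_right (by omega) h1
  have hPcard : P.card = t * (r - 1) + 1 := P_card G P hP hcard hint hs₀ hrall
  -- min degree
  have hmin : G.minDegree = d := by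
    refine le_antisymm ((G.minDegree_le_degree (Classical.arbitrary V)).trans_eq
      (hreg _)) (G.le_minDegree_of_forall_le_degree d (fun v => (hreg v).ge))
  -- cpT = P.card
  have hcpT : cpT G t = P.card := by
    have hmem : P.card ∈ {m | ∃ P' : Finset (Finset V),
        IsCliquePartition G P' ∧ (∀ s ∈ P', s.card ≤ t) ∧ P'.card = m} :=
      ⟨P, hP, fun s hs => (hcard s hs).le, rfl⟩
    have hlb : ∀ m ∈ {m | ∃ P' : Finset (Finset V),
        IsCliquePartition G P' ∧ (∀ s ∈ P', s.card ≤ t) ∧ P'.card = m}, P.card ≤ m := by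
      rintro m ⟨P', hP', hle', rfl⟩
      have hEP : Fintype.card V * d = P.card * (t * t - t) := by
        rw [← pairs_card G hreg, pairs_count G P hP]
        rw [Finset.sum_congr rfl (fun s hs => by rw [Finset.offDiag_card, hcard s hs]),
          Finset.sum_const, smul_eq_mul]
      have hEP' : Fintype.card V * d ≤ P'.card * (t * t - t) := by
        rw [← pairs_card G hreg, pairs_count G P' hP']
        calc ∑ s ∈ P', s.offDiag.card ≤ ∑ _s ∈ P', (t * t - t) := by
              apply Finset.sum_le_sum
              intro s hs
              rw [Finset.offDiag_card]
              have hc := hle' s hs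
              have h2 : s.card * (s.card - 1) ≤ t * (t - 1) :=
                Nat.mul_le_mul hc (Nat.sub_le_sub_right hc 1)
              have e1 : s.card * s.card - s.card = s.card * (s.card - 1) := by
                rw [Nat.mul_sub, mul_one]
              have e2 : t * t - t = t * (t - 1) := by rw [Nat.mul_sub, mul_one]
              rw [e1, e2]; exact h2
          _ = P'.card * (t * t - t) := by rw [Finset.sum_const, smul_eq_mul]
      have htt : 0 < t * t - t := by
        have h2t : 2 * t ≤ t * t := Nat.mul_le_mul_right t ht
        omega
      exact Nat.le_of_mul_le_mul_right (hEP ▸ hEP') htt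
    exact le_antisymm (Nat.sInf_le hmem) (hlb _ (Nat.sInf_mem ⟨_, hmem⟩))
  -- ceiling term
  have hceil : ⌈(G.minDegree : ℝ) / ((t : ℝ) - 1)⌉ = (r : ℤ) := by
    have ht1 : ((t : ℝ) - 1) ≠ 0 := by
      have : (2 : ℝ) ≤ t := by exact_mod_cast ht
      linarith
    have hdr : (G.minDegree : ℝ) = r * ((t : ℝ) - 1) := by
      rw [hmin, hd, Nat.cast_mul, Nat.cast_sub (by omega : 1 ≤ t), Nat.cast_one]
    rw [hdr, mul_div_assoc, div_self ht1, mul_one, Int.ceil_natCast]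
  rw [hcpT, specRad_regular G hreg, hceil, hPcard]
  push_cast [Nat.cast_sub hr1, hd, Nat.cast_sub (by omega : 1 ≤ t)]
  ring
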